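/- A hypergraph G is β-acyclic if and only if its nest-set width nsw(G) equals 1. -/

import Mathlib

open Finset

/-- `N` is a nest-set of the hypergraph with edge set `E`: the family
`{e \ N : e ∈ E, e ∩ N ≠ ∅}` is totally ordered by inclusion. -/
def IsNestSet {V : Type*} [DecidableEq V] (E : Finset (Finset V)) (N : Finset V) : Prop :=
  ∀ e₁ ∈ E, ∀ e₂ ∈ E, (e₁ ∩ N).Nonempty → (e₂ ∩ N).Nonempty →
    e₁ \ N ⊆ e₂ \ N ∨ e₂ \ N ⊆ e₁ \ N

/-- `v` is a nest point: the edges containing `v` are totally ordered by inclusion. -/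
def IsNestPoint {V : Type*} (E : Finset (Finset V)) (v : V) : Prop :=
  ∀ e₁ ∈ E, ∀ e₂ ∈ E, v ∈ e₁ → v ∈ e₂ → e₁ ⊆ e₂ ∨ e₂ ⊆ e₁

/-- The edge set of the hypergraph `G - N`. -/
def hreduce {V : Type*} [DecidableEq V] (E : Finset (Finset V)) (N : Finset V) :
    Finset (Finset V) :=
  (E.image (fun e => e \ N)).filter (fun e => 2 ≤ e.card)

/-- `gap(G, N) = max { |N| - |e ∩ N| : e ∈ E, e ∩ N ≠ ∅ }`. -/
def hgap {V : Type*} [DecidableEq V] (E : Finset (Finset V)) (N : Finset V) : ℕ :=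
  (E.filter (fun e => (e ∩ N).Nonempty)).sup (fun e => N.card - (e ∩ N).card)

/-- `L = N₁, …, N_t` is a nest-set elimination order of the hypergraph with node set `Vs`
and edge set `E`. -/
def IsElimOrder {V : Type*} [DecidableEq V] (Vs : Finset V) (E : Finset (Finset V))
    (L : List (Finset V)) : Prop :=
  L.Pairwise Disjoint ∧ (∀ N ∈ L, N.Nonempty) ∧ L.foldr (· ∪ ·) ∅ = Vs ∧
  ∀ i : Fin L.length, IsNestSet ((L.take i).foldl hreduce E) (L.get i)

/-- The nest-set width of an elimination order: maximum cardinality of an element. -/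
def nswOf {V : Type*} (L : List (Finset V)) : ℕ := (L.map Finset.card).foldr max 0

/-- The nest-set gap of an elimination order: max over `i` of
`gap(G - N₁ - ⋯ - N_{i-1}, N_i)`. -/
def nsgOf {V : Type*} [DecidableEq V] (E : Finset (Finset V)) (L : List (Finset V)) : ℕ :=
  ((List.range L.length).map
    (fun i => hgap ((L.take i).foldl hreduce E) (L.getD i ∅))).foldr max 0

/-- A β-cycle `v₀, e₀, v₁, e₁, …, v_{ℓ-1}, e_{ℓ-1}, v₀` of length `ℓ = l + 3 ≥ 3` in the
hypergraph with edge set `E`: distinct nodes, distinct edges, and `v i` belongs to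
`e (i-1)`, `e i` and to no other `e j` (indices cyclic in `Fin (l + 3)`). -/
def IsBetaCycle {V : Type*} (E : Finset (Finset V)) (l : ℕ)
    (v : Fin (l + 3) → V) (e : Fin (l + 3) → Finset V) : Prop :=
  Function.Injective v ∧ Function.Injective e ∧ (∀ i, e i ∈ E) ∧
  ∀ i j, v i ∈ e j ↔ (j = i ∨ j + 1 = i)

/-- A hypergraph `G` is β-acyclic if it contains no β-cycle. -/
def BetaAcyclic {V : Type*} (E : Finset (Finset V)) : Prop :=
  ¬ ∃ (l : ℕ) (v : Fin (l + 3) → V) (e : Fin (l + 3) → Finset V), IsBetaCycle E l v e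
open Finset
set_option linter.unusedSectionVars false
open Fin.CommRing Fin.NatCast

section Cyc
variable {V : Type*} [DecidableEq V] {l : ℕ}

lemma fin1 : (1 : Fin (l+3)) ≠ 0 := by simp [Fin.ext_iff]
lemma fin2 : (2 : Fin (l+3)) ≠ 0 := by simp [Fin.ext_iff, Nat.mod_eq_of_lt (show 2 < l+3 by omega)]

lemma finA (i : Fin (l+3)) : i - 1 ≠ i := by
  intro h
  rw [sub_eq_iff_eq_add] at h
  exact fin1 (left_eq_add.mp h)

lemma finB (i : Fin (l+3)) : i + 1 ≠ i - 1 := by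
  intro h
  rw [eq_sub_iff_add_eq, add_assoc, one_add_one_eq_two] at h
  exact fin2 (add_eq_left.mp h)

lemma finD (i : Fin (l+3)) : i + 1 ≠ i := fun h => fin1 (add_eq_left.mp h)

lemma mem_hreduce {E : Finset (Finset V)} {N e' : Finset V} :
    e' ∈ hreduce E N ↔ (∃ e ∈ E, e \ N = e') ∧ 2 ≤ e'.card := by
  simp [hreduce, mem_filter, mem_image]

variable {E : Finset (Finset V)} {v : Fin (l + 3) → V} {e : Fin (l + 3) → Finset V}

lemma cyc_mem_self (h : IsBetaCycle E l v e) (i : Fin (l+3)) : v i ∈ e i :=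
  (h.2.2.2 i i).mpr (Or.inl rfl)

lemma cyc_mem_pred (h : IsBetaCycle E l v e) (i : Fin (l+3)) : v i ∈ e (i - 1) :=
  (h.2.2.2 i (i-1)).mpr (Or.inr (sub_add_cancel i 1))

/-- lifting: a β-cycle of `hreduce E N` lifts to one of `E`. -/
lemma cycle_lift {N : Finset V} (hA : BetaAcyclic E) : BetaAcyclic (hreduce E N) := by
  intro hcyc
  obtain ⟨l', v', e', hinj, heinj, hmem, hiff⟩ := hcyc
  apply hA
  have hch : ∀ i, ∃ f ∈ E, f \ N = e' i := fun i => (mem_hreduce.mp (hmem i)).1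
  choose f hfE hfN using hch
  refine ⟨l', v', f, hinj, ?_, fun i => hfE i, ?_⟩
  · intro i j hij
    apply heinj
    rw [← hfN i, ← hfN j, hij]
  · intro i j
    have hvN : v' i ∉ N := by
      have := (hiff i i).mpr (Or.inl rfl)
      rw [← hfN i] at this
      exact (mem_sdiff.mp this).2
    constructor
    · intro hv
      exact (hiff i j).mp (by rw [← hfN j]; exact mem_sdiff.mpr ⟨hv, hvN⟩)
    · intro hj
      have := (hiff i j).mpr hj
      rw [← hfN j] at this
      exact (mem_sdiff.mp this).1

/-- a nest-point (singleton nest-set) is not a vertex of any β-cycle. -/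
lemma cycle_not_vertex (h : IsBetaCycle E l v e) {x : V} (hx : IsNestSet E {x})
    (i : Fin (l+3)) : v i ≠ x := by
  intro hvx
  have h1 : x ∈ e i := hvx ▸ cyc_mem_self h i
  have h2 : x ∈ e (i-1) := hvx ▸ cyc_mem_pred h i
  have hnon : ((e (i-1)) ∩ {x}).Nonempty := ⟨x, by simp [h2]⟩
  have hnon' : ((e i) ∩ {x}).Nonempty := ⟨x, by simp [h1]⟩
  rcases hx _ (h.2.2.1 (i-1)) _ (h.2.2.1 i) hnon hnon' with hsub | hsub
  · have hw : v (i-1) ∈ e (i-1) := cyc_mem_self h (i-1)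
    have hwx : v (i-1) ≠ x := by
      rw [← hvx]
      exact fun hcon => finA i (h.1 hcon)
    have hmem : v (i-1) ∈ e i :=
      (mem_sdiff.mp (hsub (mem_sdiff.mpr ⟨hw, by simp [hwx]⟩))).1
    rcases (h.2.2.2 (i-1) i).mp hmem with hc | hc
    · exact finA i hc.symm
    · exact finB i hc
  · have hw : v (i+1) ∈ e i := (h.2.2.2 (i+1) i).mpr (Or.inr rfl)
    have hwx : v (i+1) ≠ x := by
      rw [← hvx]
      exact fun hcon => finD i (h.1 hcon)
    have hmem : v (i+1) ∈ e (i-1) :=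
      (mem_sdiff.mp (hsub (mem_sdiff.mpr ⟨hw, by simp [hwx]⟩))).1
    rcases (h.2.2.2 (i+1) (i-1)).mp hmem with hc | hc
    · exact finB i hc.symm
    · rw [sub_add_cancel] at hc
      exact finD i hc.symm

/-- survival: reducing by a singleton nest-set preserves β-cycles. -/
lemma cycle_surv (h : IsBetaCycle E l v e) {x : V} (hx : IsNestSet E {x}) :
    IsBetaCycle (hreduce E {x}) l v (fun i => e i \ {x}) := by
  obtain ⟨hv, he, hmem, hiff⟩ := h
  have hvx : ∀ i, v i ≠ x := fun i => cycle_not_vertex ⟨hv, he, hmem, hiff⟩ hx i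
  refine ⟨hv, ?_, ?_, ?_⟩
  · intro i j hij
    have hij2 : e i \ {x} = e j \ {x} := hij
    by_contra hne
    have hij' : e i ≠ e j := fun hc => hne (he hc)
    have key : ∀ a b : Fin (l+3), a ≠ b → x ∈ e a → x ∉ e b →
        e a \ {x} = e b \ {x} → False := by
      intro a b hab hxa hxb hab'
      have hsub : e b ⊆ e a := by
        intro t ht
        have htx : t ≠ x := fun hc => hxb (hc ▸ ht)
        have : t ∈ e a \ {x} := hab' ▸ mem_sdiff.mpr ⟨ht, by simp [htx]⟩
        exact (mem_sdiff.mp this).1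
      have h1 : v b ∈ e a := hsub ((hiff b b).mpr (Or.inl rfl))
      have h2 : v (b+1) ∈ e a := hsub ((hiff (b+1) b).mpr (Or.inr rfl))
      rcases (hiff b a).mp h1 with hc | hc
      · exact hab hc
      · rcases (hiff (b+1) a).mp h2 with hc' | hc'
        · rw [hc'] at hc
          rw [add_assoc, one_add_one_eq_two] at hc
          exact fin2 (add_eq_left.mp hc)
        · exact hab (add_right_cancel hc')
    by_cases hxi : x ∈ e i <;> by_cases hxj : x ∈ e j
    · apply hij'
      ext t
      by_cases htx : t = x
      · simp [htx, hxi, hxj]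
      · constructor
        · intro ht
          have : t ∈ e j \ {x} := hij2 ▸ mem_sdiff.mpr ⟨ht, by simp [htx]⟩
          exact (mem_sdiff.mp this).1
        · intro ht
          have : t ∈ e i \ {x} := hij2.symm ▸ mem_sdiff.mpr ⟨ht, by simp [htx]⟩
          exact (mem_sdiff.mp this).1
    · exact key i j hne hxi hxj hij2
    · exact key j i (fun h' => hne h'.symm) hxj hxi hij2.symm
    · apply hij'
      ext t
      by_cases htx : t = x
      · simp [htx, hxi, hxj]
      · constructor
        · intro ht
          have : t ∈ e j \ {x} := hij2 ▸ mem_sdiff.mpr ⟨ht, by simp [htx]⟩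
          exact (mem_sdiff.mp this).1
        · intro ht
          have : t ∈ e i \ {x} := hij2.symm ▸ mem_sdiff.mpr ⟨ht, by simp [htx]⟩
          exact (mem_sdiff.mp this).1
  · intro i
    apply mem_hreduce.mpr
    refine ⟨⟨e i, hmem i, rfl⟩, ?_⟩
    have h1 : v i ∈ e i \ {x} := mem_sdiff.mpr ⟨(hiff i i).mpr (Or.inl rfl), by simp [hvx i]⟩
    have h2 : v (i+1) ∈ e i \ {x} := mem_sdiff.mpr ⟨(hiff (i+1) i).mpr (Or.inr rfl), by simp [hvx (i+1)]⟩
    have hne : v i ≠ v (i+1) := fun hc => finD i (hv hc).symm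
    calc 2 = ({v i, v (i+1)} : Finset V).card := (card_pair hne).symm
    _ ≤ (e i \ {x}).card := card_le_card (by
        intro t ht
        simp only [mem_insert, mem_singleton] at ht
        rcases ht with h | h <;> simp [h, h1, h2])
  · intro i j
    constructor
    · intro hm
      exact (hiff i j).mp (mem_sdiff.mp hm).1
    · intro hj
      exact mem_sdiff.mpr ⟨(hiff i j).mpr hj, by simp [hvx i]⟩

end Cyc
section Backward
variable {V : Type*} [DecidableEq V]

lemma foldl_take_succ (L : List (Finset V)) (E : Finset (Finset V)) (i : ℕ) (hi : i < L.length) :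
    (L.take (i+1)).foldl hreduce E = hreduce ((L.take i).foldl hreduce E) (L.get ⟨i, hi⟩) := by
  rw [List.take_succ, List.getElem?_eq_getElem hi, Option.toList_some, List.foldl_append,
    List.foldl_cons, List.foldl_nil, List.get_eq_getElem]

lemma edge_sub (L : List (Finset V)) (E : Finset (Finset V)) (e' : Finset V)
    (h : e' ∈ L.foldl hreduce E) : ∃ e₀ ∈ E, e' ⊆ e₀ ∧ Disjoint e' (L.foldr (· ∪ ·) ∅) := by
  induction L generalizing E with
  | nil => exact ⟨e', h, subset_rfl, by simp⟩
  | cons N M ih =>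
    obtain ⟨e₁, he₁, hsub, hdisj⟩ := ih (hreduce E N) h
    obtain ⟨⟨e₀, he₀, rfl⟩, -⟩ := mem_hreduce.mp he₁
    refine ⟨e₀, he₀, hsub.trans (sdiff_subset), ?_⟩
    simp only [List.foldr_cons]
    rw [disjoint_union_right]
    exact ⟨disjoint_of_subset_left hsub sdiff_disjoint, hdisj⟩

end Backward
lemma backward_dir {V : Type*} [Fintype V] [DecidableEq V] (E : Finset (Finset V))
    (L : List (Finset V)) (hL : IsElimOrder Finset.univ E L) (h1 : ∀ N ∈ L, N.card = 1) :
    BetaAcyclic E := by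
  intro hcyc
  obtain ⟨l, v, e, hc⟩ := hcyc
  obtain ⟨hdisjL, hneL, hunion, hnest⟩ := hL
  have stage : ∀ i, i ≤ L.length → ∃ e', IsBetaCycle ((L.take i).foldl hreduce E) l v e' := by
    intro i
    induction i with
    | zero => exact fun _ => ⟨e, by simpa using hc⟩
    | succ i ih =>
      intro hi
      have hi' : i < L.length := by omega
      obtain ⟨e', hc'⟩ := ih (by omega)
      have hns := hnest ⟨i, hi'⟩
      obtain ⟨x, hx⟩ := Finset.card_eq_one.mp (h1 (L.get ⟨i, hi'⟩) (by rw [List.get_eq_getElem]; exact List.getElem_mem hi'))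
      rw [hx] at hns
      rw [foldl_take_succ L E i hi', hx]
      exact ⟨_, cycle_surv hc' hns⟩
  obtain ⟨e', hc'⟩ := stage L.length le_rfl
  rw [List.take_length] at hc'
  have h0 : v 0 ∈ e' 0 := cyc_mem_self hc' 0
  obtain ⟨e₀, -, -, hd⟩ := edge_sub L E (e' 0) (hc'.2.2.1 0)
  rw [hunion] at hd
  exact absurd (Finset.mem_univ (v 0)) (Finset.disjoint_left.mp hd h0)
section Hard
variable {V : Type*} [DecidableEq V]

lemma beta_mono {E₁ E₂ : Finset (Finset V)} (h : E₁ ⊆ E₂) (hA : BetaAcyclic E₂) :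
    BetaAcyclic E₁ := by
  intro hcyc
  obtain ⟨l, v, e, h1, h2, h3, h4⟩ := hcyc
  exact hA ⟨l, v, e, h1, h2, fun i => h (h3 i), h4⟩

lemma build_cycle (E' : Finset (Finset V)) (m : ℕ) (hm : 3 ≤ m)
    (EE : ℕ → Finset V) (VV : ℕ → V)
    (hE : ∀ k, k < m → EE k ∈ E')
    (hEinj : ∀ k, k < m → ∀ k', k' < m → k ≠ k' → EE k ≠ EE k')
    (hVinj : ∀ k, k < m → ∀ k', k' < m → k ≠ k' → VV k ≠ VV k')
    (hmem : ∀ i, i < m → ∀ j, j < m → (VV i ∈ EE j ↔ (j = i ∨ (j+1) % m = i))) :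
    ¬ BetaAcyclic E' := by
  intro hA
  obtain ⟨l, hl⟩ : ∃ l, m = l + 3 := ⟨m - 3, by omega⟩
  subst hl
  apply hA
  refine ⟨l, fun i => VV i.val, fun i => EE i.val, ?_, ?_, fun i => hE _ i.isLt, ?_⟩
  · intro i j hij
    by_contra hne
    exact hVinj i.val i.isLt j.val j.isLt (fun h => hne (Fin.ext h)) hij
  · intro i j hij
    by_contra hne
    exact hEinj i.val i.isLt j.val j.isLt (fun h => hne (Fin.ext h)) hij
  · intro i j
    rw [hmem i.val i.isLt j.val j.isLt]
    constructor
    · rintro (h | h)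
      · exact Or.inl (Fin.ext h)
      · refine Or.inr (Fin.ext ?_)
        rw [Fin.add_def]
        simpa using h
    · rintro (h | h)
      · exact Or.inl (congrArg Fin.val h)
      · refine Or.inr ?_
        have := congrArg Fin.val h
        rw [Fin.add_def] at this
        simpa using this

/-- triangle builder -/
lemma triangle (E' : Finset (Finset V)) (e₁ e₂ e₃ : Finset V) (a b c : V)
    (h₁ : e₁ ∈ E') (h₂ : e₂ ∈ E') (h₃ : e₃ ∈ E')
    (ha₁ : a ∈ e₁) (ha₂ : a ∈ e₂) (ha₃ : a ∉ e₃)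
    (hb₂ : b ∈ e₂) (hb₃ : b ∈ e₃) (hb₁ : b ∉ e₁)
    (hc₃ : c ∈ e₃) (hc₁ : c ∈ e₁) (hc₂ : c ∉ e₂) :
    ¬ BetaAcyclic E' := by
  have hab : a ≠ b := fun h => ha₃ (h ▸ hb₃)
  have hbc : b ≠ c := fun h => hb₁ (h ▸ hc₁)
  have hac : a ≠ c := fun h => hc₂ (h ▸ ha₂)
  have he12 : e₁ ≠ e₂ := fun h => hb₁ (h ▸ hb₂)
  have he23 : e₂ ≠ e₃ := fun h => hc₂ (h ▸ hc₃)
  have he13 : e₁ ≠ e₃ := fun h => hb₁ (h ▸ hb₃)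
  have hba := hab.symm
  have hcb := hbc.symm
  have hca := hac.symm
  have he21 := he12.symm
  have he32 := he23.symm
  have he31 := he13.symm
  apply build_cycle E' 3 le_rfl
    (fun k => if k = 0 then e₁ else if k = 1 then e₂ else e₃)
    (fun k => if k = 0 then c else if k = 1 then a else b)
  · intro k hk
    interval_cases k <;> simp [h₁, h₂, h₃]
  · intro k hk k' hk' hne
    interval_cases k <;> interval_cases k' <;> simp_all
  · intro k hk k' hk' hne
    interval_cases k <;> interval_cases k' <;> simp_all
  · intro i hi j hj
    interval_cases i <;> interval_cases j <;>
      simp_all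
end Hard
section Hard2
variable {V : Type*} [DecidableEq V] {l : ℕ} {E' : Finset (Finset V)}
  {v : Fin (l+3) → V} {e : Fin (l+3) → Finset V}

lemma rot (h : IsBetaCycle E' l v e) (k : Fin (l+3)) :
    IsBetaCycle E' l (fun i => v (i + k)) (fun i => e (i + k)) := by
  obtain ⟨h1, h2, h3, h4⟩ := h
  refine ⟨fun i j hij => add_right_cancel (h1 hij), fun i j hij => add_right_cancel (h2 hij),
    fun i => h3 _, fun i j => ?_⟩
  rw [h4 (i+k) (j+k)]
  constructor
  · rintro (h | h)
    · exact Or.inl (add_right_cancel h)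
    · exact Or.inr (add_right_cancel (by rwa [add_right_comm] at h))
  · rintro (rfl | h)
    · exact Or.inl rfl
    · exact Or.inr (by rw [← h, add_right_comm])

lemma rev (h : IsBetaCycle E' l v e) :
    IsBetaCycle E' l (fun i => v (-i)) (fun i => e (-(i+1))) := by
  obtain ⟨h1, h2, h3, h4⟩ := h
  refine ⟨fun i j hij => neg_injective (h1 hij), fun i j hij => ?_, fun i => h3 _, fun i j => ?_⟩
  · have := neg_injective (h2 hij)
    exact add_right_cancel this
  · rw [h4 (-i) (-(j+1))]
    have key : -(j+1) + 1 = -j := by ring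
    constructor
    · rintro (h | h)
      · exact Or.inr (neg_inj.mp h)
      · rw [key] at h
        exact Or.inl (neg_inj.mp h)
    · rintro (h | h)
      · rw [key]
        exact Or.inr (by rw [h])
      · exact Or.inl (by rw [h])

/-- Build a β-cycle from a cyclically indexed sequence over ℕ. Injectivity is derived. -/
lemma cyc_of_seq (m : ℕ) (hm : 3 ≤ m) (EE : ℕ → Finset V) (VV : ℕ → V)
    (c1 : ∀ k, k < m → EE k ∈ E')
    (c2 : ∀ k, k < m → VV k ∈ EE k)
    (c3 : ∀ k, 1 ≤ k → k < m → VV k ∈ EE (k-1))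
    (c4 : VV 0 ∈ EE (m-1))
    (c5 : ∀ i, i < m → ∀ j, j < m → VV i ∈ EE j → (j = i ∨ j + 1 = i ∨ (j = m-1 ∧ i = 0))) :
    ¬ BetaAcyclic E' := by
  have hVinj : ∀ i, i < m → ∀ j, j < m → i ≠ j → VV i ≠ VV j := by
    intro i hi j hj hne heq
    have h1 : VV i ∈ EE j := heq ▸ c2 j hj
    have h2 : VV j ∈ EE i := heq ▸ c2 i hi
    have r1 := c5 i hi j hj h1
    have r2 := c5 j hj i hi h2
    omega
  have succlt : ∀ a, a < m → (if a = m-1 then 0 else a+1) < m := by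
    intro a ha; split <;> omega
  have hEinj : ∀ i, i < m → ∀ j, j < m → i ≠ j → EE i ≠ EE j := by
    intro i hi j hj hne heq
    have key : ∀ a, a < m → ∀ b, b < m → EE a = EE b →
        (b = (if a = m-1 then 0 else a+1) ∨ b + 1 = (if a = m-1 then 0 else a+1) ∨
          (b = m-1 ∧ (if a = m-1 then 0 else a+1) = 0)) := by
      intro a ha b hb hab
      have hv : VV (if a = m-1 then 0 else a+1) ∈ EE b := by
        rw [← hab]
        by_cases hc : a = m-1
        · rw [if_pos hc, hc]
          exact c4
        · rw [if_neg hc]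
          have := c3 (a+1) (by omega) (by omega)
          simpa using this
      exact c5 _ (succlt a ha) b hb hv
    have r1 := key i hi j hj heq
    have r2 := key j hj i hi heq.symm
    by_cases hc1 : i = m-1 <;> by_cases hc2 : j = m-1
    · exact hne (hc1.trans hc2.symm)
    · rw [if_pos hc1] at r1
      rw [if_neg hc2] at r2
      omega
    · rw [if_neg hc1] at r1
      rw [if_pos hc2] at r2
      omega
    · rw [if_neg hc1] at r1
      rw [if_neg hc2] at r2
      omega
  apply build_cycle E' m hm EE VV c1 hEinj hVinj
  intro i hi j hj
  constructor
  · intro hv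
    rcases c5 i hi j hj hv with h | h | h
    · exact Or.inl h
    · refine Or.inr ?_
      rw [Nat.mod_eq_of_lt (by omega)]
      exact h
    · refine Or.inr ?_
      have hj1 : j + 1 = m := by omega
      rw [hj1, Nat.mod_self]
      omega
  · intro h
    rcases h with h | h
    · rw [h]
      exact c2 i hi
    · by_cases hc : j = m - 1
      · have hj1 : j + 1 = m := by omega
        rw [hj1, Nat.mod_self] at h
        rw [hc, ← h]
        exact c4
      · rw [Nat.mod_eq_of_lt (by omega)] at h
        have h3 := c3 i (by omega) hi
        have hij : i - 1 = j := by omega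
        rw [hij] at h3
        exact h3
end Hard2
section Nomix
variable {V : Type*} [DecidableEq V]

/-- D-cycle: a path from a quasi-edge `a` back to `S`, with a vertex `y ∈ S ∩ a`
avoiding the path, closes into a β-cycle. -/
lemma pathD (S : Finset V) (E : Finset (Finset V)) (hA : BetaAcyclic (insert S E))
    (n : ℕ) (a : Finset V) (g : ℕ → Finset V) (w : ℕ → V) (t y : V)
    (ha : a ∈ E)
    (hg1 : ∀ i, i ≤ n → g i ∈ E)
    (hg4 : ∀ i, i ≤ n → w i ∉ S)
    (hg5 : ∀ i, i ≤ n → w i ∈ g i)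
    (hg6 : ∀ i, 1 ≤ i → i ≤ n → w i ∈ g (i-1))
    (hg7 : ∀ i, i ≤ n → ∀ j, j ≤ n → w i ∈ g j → (j = i ∨ j + 1 = i))
    (hg8a : w 0 ∈ a) (hg8b : ∀ i, 1 ≤ i → i ≤ n → w i ∉ a)
    (ht1 : t ∈ S) (ht2 : t ∈ g n) (ht3 : ∀ j, j < n → t ∉ g j) (ht4 : t ∉ a)
    (hy1 : y ∈ S) (hy2 : y ∈ a) (hy3 : ∀ j, j ≤ n → y ∉ g j) : False := by
  refine cyc_of_seq (E' := insert S E) (n+3) (by omega)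
    (fun k => if k = 0 then a else if k ≤ n+1 then g (k-1) else S)
    (fun k => if k = 0 then y else if k ≤ n+1 then w (k-1) else t)
    ?_ ?_ ?_ ?_ ?_ hA
  · intro k hk
    by_cases hk0 : k = 0
    · rw [if_pos hk0]; exact Finset.mem_insert_of_mem ha
    · by_cases hk1 : k ≤ n+1
      · rw [if_neg hk0, if_pos hk1]
        exact Finset.mem_insert_of_mem (hg1 (k-1) (by omega))
      · rw [if_neg hk0, if_neg hk1]
        exact Finset.mem_insert_self S E
  · intro k hk
    by_cases hk0 : k = 0
    · subst hk0; simpa using hy2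
    · by_cases hk1 : k ≤ n+1
      · rw [if_neg hk0, if_pos hk1, if_neg hk0, if_pos hk1]
        exact hg5 (k-1) (by omega)
      · rw [if_neg hk0, if_neg hk1, if_neg hk0, if_neg hk1]
        exact ht1
  · intro k hk1 hk2
    have hk0 : ¬ k = 0 := by omega
    by_cases hk1' : k ≤ n+1
    · rw [if_neg hk0, if_pos hk1']
      by_cases hke1 : k = 1
      · have h0 : k - 1 = 0 := by omega
        rw [h0]
        simpa using hg8a
      · have h0 : ¬ (k-1) = 0 := by omega
        have h1 : k - 1 ≤ n + 1 := by omega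
        rw [if_neg h0, if_pos h1]
        exact hg6 (k-1) (by omega) (by omega)
    · have hk2' : k = n+2 := by omega
      rw [if_neg hk0, if_neg hk1']
      have h0 : ¬ (k-1) = 0 := by omega
      have h1 : k - 1 ≤ n + 1 := by omega
      rw [if_neg h0, if_pos h1]
      have : k - 1 - 1 = n := by omega
      rw [this]
      exact ht2
  · have h0 : ¬ (n+3-1) = 0 := by omega
    have h1 : ¬ (n+3-1) ≤ n+1 := by omega
    rw [if_pos rfl, if_neg h0, if_neg h1]
    exact hy1
  · intro i hi j hj hv
    by_cases hi0 : i = 0 <;> by_cases hj0 : j = 0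
    · left; omega
    · rw [if_pos hi0] at hv
      by_cases hj1 : j ≤ n+1
      · rw [if_neg hj0, if_pos hj1] at hv
        exact absurd hv (hy3 (j-1) (by omega))
      · right; right; omega
    · rw [if_pos hj0] at hv
      by_cases hi1 : i ≤ n+1
      · rw [if_neg hi0, if_pos hi1] at hv
        by_cases hione : i = 1
        · right; left; omega
        · exact absurd hv (hg8b (i-1) (by omega) (by omega))
      · rw [if_neg hi0, if_neg hi1] at hv
        exact absurd hv ht4
    · by_cases hi1 : i ≤ n+1 <;> by_cases hj1 : j ≤ n+1
      · rw [if_neg hi0, if_pos hi1, if_neg hj0, if_pos hj1] at hv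
        have := hg7 (i-1) (by omega) (j-1) (by omega) hv
        omega
      · rw [if_neg hi0, if_pos hi1, if_neg hj0, if_neg hj1] at hv
        exact absurd hv (hg4 (i-1) (by omega))
      · rw [if_neg hi0, if_neg hi1, if_neg hj0, if_pos hj1] at hv
        by_cases hjn : j = n+1
        · right; left; omega
        · exact absurd hv (ht3 (j-1) (by omega))
      · left; omega

/-- K-cycle: a path from `a` reaching a vertex `y ∈ S ∩ a` at step `j₀ ≥ 1`
closes into a β-cycle (not using `S`). -/
lemma pathK (S : Finset V) (E : Finset (Finset V)) (hA : BetaAcyclic (insert S E))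
    (n : ℕ) (a : Finset V) (g : ℕ → Finset V) (w : ℕ → V) (y : V) (j₀ : ℕ)
    (ha : a ∈ E)
    (hg1 : ∀ i, i ≤ n → g i ∈ E)
    (hg4 : ∀ i, i ≤ n → w i ∉ S)
    (hg5 : ∀ i, i ≤ n → w i ∈ g i)
    (hg6 : ∀ i, 1 ≤ i → i ≤ n → w i ∈ g (i-1))
    (hg7 : ∀ i, i ≤ n → ∀ j, j ≤ n → w i ∈ g j → (j = i ∨ j + 1 = i))
    (hg8a : w 0 ∈ a) (hg8b : ∀ i, 1 ≤ i → i ≤ n → w i ∉ a)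
    (hy1 : y ∈ S) (hy2 : y ∈ a) (hj1 : 1 ≤ j₀) (hj2 : j₀ ≤ n)
    (hy4 : y ∈ g j₀) (hy5 : ∀ j, j < j₀ → y ∉ g j) : False := by
  refine cyc_of_seq (E' := insert S E) (j₀+2) (by omega)
    (fun k => if k = 0 then a else g (k-1))
    (fun k => if k = 0 then y else w (k-1))
    ?_ ?_ ?_ ?_ ?_ hA
  · intro k hk
    by_cases hk0 : k = 0
    · rw [if_pos hk0]; exact Finset.mem_insert_of_mem ha
    · rw [if_neg hk0]
      exact Finset.mem_insert_of_mem (hg1 (k-1) (by omega))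
  · intro k hk
    by_cases hk0 : k = 0
    · subst hk0; simpa using hy2
    · rw [if_neg hk0, if_neg hk0]
      exact hg5 (k-1) (by omega)
  · intro k hk1 hk2
    have hk0 : ¬ k = 0 := by omega
    rw [if_neg hk0]
    by_cases hke1 : k = 1
    · have h0 : k - 1 = 0 := by omega
      rw [h0]
      simpa using hg8a
    · have h0 : ¬ (k-1) = 0 := by omega
      rw [if_neg h0]
      exact hg6 (k-1) (by omega) (by omega)
  · have h0 : ¬ (j₀+2-1) = 0 := by omega
    rw [if_pos rfl, if_neg h0]
    have : j₀ + 2 - 1 - 1 = j₀ := by omega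
    rw [this]
    exact hy4
  · intro i hi j hj hv
    by_cases hi0 : i = 0 <;> by_cases hj0 : j = 0
    · left; omega
    · rw [if_pos hi0, if_neg hj0] at hv
      by_cases hjn : j = j₀ + 1
      · right; right; omega
      · exact absurd hv (hy5 (j-1) (by omega))
    · rw [if_neg hi0, if_pos hj0] at hv
      by_cases hione : i = 1
      · right; left; omega
      · exact absurd hv (hg8b (i-1) (by omega) (by omega))
    · rw [if_neg hi0, if_neg hj0] at hv
      have := hg7 (i-1) (by omega) (j-1) (by omega) hv
      omega

end Nomix
section NomixMain
variable {V : Type*} [DecidableEq V]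

lemma nomix (S f : Finset V) (E : Finset (Finset V))
    (hA : BetaAcyclic (insert S E)) (hfS : (f ∩ S).Nonempty)
    (hmax : ∀ g' ∈ E, (g' ∩ S).Nonempty → (g' \ S).Nonempty → ¬ (f ∩ S ⊂ g' ∩ S)) :
    ∀ (L : ℕ) (a : Finset V) (g : ℕ → Finset V) (w : ℕ → V) (t : V),
    a ∈ E → f ∩ S ⊆ a →
    (∀ i, i ≤ L → g i ∈ E) →
    (∀ i, i ≤ L → ∀ j, j ≤ L → i ≠ j → g i ≠ g j) →
    (∀ i, i ≤ L → g i ≠ a) →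
    (∀ i, i ≤ L → w i ∉ S) →
    (∀ i, i ≤ L → w i ∈ g i) →
    (∀ i, 1 ≤ i → i ≤ L → w i ∈ g (i-1)) →
    (∀ i, i ≤ L → ∀ j, j ≤ L → w i ∈ g j → (j = i ∨ j + 1 = i)) →
    (w 0 ∈ a) → (∀ i, 1 ≤ i → i ≤ L → w i ∉ a) →
    t ∈ S → t ∈ g L → (∀ j, j < L → t ∉ g j) → t ∉ a → t ∉ f → False := by
  intro L
  induction L with
  | zero =>
    intro a g w t ha hfa hg1 hg2 hg3 hg4 hg5 hg6 hg7 hg8a hg8b ht1 ht2 ht3 ht4 ht5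
    have hkey : ∀ y ∈ S ∩ a, y ∈ g 0 := by
      intro y hy
      by_contra hyg
      obtain ⟨hyS, hya⟩ := Finset.mem_inter.mp hy
      exact triangle (insert S E) a (g 0) S (w 0) t y
        (Finset.mem_insert_of_mem ha) (Finset.mem_insert_of_mem (hg1 0 le_rfl))
        (Finset.mem_insert_self S E) hg8a (hg5 0 le_rfl) (hg4 0 le_rfl)
        ht2 ht1 ht4 hyS hya hyg hA
    apply hmax (g 0) (hg1 0 le_rfl) ⟨t, Finset.mem_inter.mpr ⟨ht2, ht1⟩⟩
      ⟨w 0, Finset.mem_sdiff.mpr ⟨hg5 0 le_rfl, hg4 0 le_rfl⟩⟩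
    constructor
    · intro x hx
      obtain ⟨hxf, hxS⟩ := Finset.mem_inter.mp hx
      exact Finset.mem_inter.mpr ⟨hkey x (Finset.mem_inter.mpr ⟨hxS, hfa hx⟩), hxS⟩
    · intro hcon
      have := hcon (Finset.mem_inter.mpr ⟨ht2, ht1⟩)
      exact ht5 (Finset.mem_inter.mp this).1
  | succ L ih =>
    intro a g w t ha hfa hg1 hg2 hg3 hg4 hg5 hg6 hg7 hg8a hg8b ht1 ht2 ht3 ht4 ht5
    -- every vertex of S ∩ a lies in g 0
    have hSag : ∀ y ∈ S ∩ a, y ∈ g 0 := by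
      intro y hy
      obtain ⟨hyS, hya⟩ := Finset.mem_inter.mp hy
      by_contra hy0
      by_cases hex : ∃ j, j ≤ L + 1 ∧ y ∈ g j
      · classical
        have hj₀ := Nat.find_spec hex
        set j₀ := Nat.find hex with hj₀def
        have hj₀min : ∀ j, j < j₀ → y ∉ g j := by
          intro j hj hyj
          by_cases hjL : j ≤ L + 1
          · exact Nat.find_min hex hj ⟨hjL, hyj⟩
          · omega
        have hj₀pos : 1 ≤ j₀ := by
          rcases Nat.eq_zero_or_pos j₀ with h | h
          · rw [h] at hj₀
            exact absurd hj₀.2 hy0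
          · exact h
        exact pathK S E hA (L+1) a g w y j₀ ha hg1 hg4 hg5 hg6 hg7 hg8a hg8b
          hyS hya hj₀pos hj₀.1 hj₀.2 hj₀min
      · push_neg at hex
        exact pathD S E hA (L+1) a g w t y ha hg1 hg4 hg5 hg6 hg7 hg8a hg8b
          ht1 ht2 ht3 ht4 hyS hya hex
    -- descend to the shorter path anchored at g 0
    refine ih (g 0) (fun i => g (i+1)) (fun i => w (i+1)) t (hg1 0 (by omega)) ?_ ?_ ?_ ?_ ?_ ?_ ?_ ?_ ?_ ?_ ht1 ?_ ?_ ?_ ht5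
    · intro x hx
      obtain ⟨hxf, hxS⟩ := Finset.mem_inter.mp hx
      exact hSag x (Finset.mem_inter.mpr ⟨hxS, hfa hx⟩)
    · intro i hi; exact hg1 (i+1) (by omega)
    · intro i hi j hj hne; exact hg2 (i+1) (by omega) (j+1) (by omega) (by omega)
    · intro i hi; exact hg2 (i+1) (by omega) 0 (by omega) (by omega)
    · intro i hi; exact hg4 (i+1) (by omega)
    · intro i hi; exact hg5 (i+1) (by omega)
    · intro i hi1 hi2
      have hh : i - 1 + 1 = i := by omega
      rw [hh]
      simpa using hg6 (i+1) (by omega) (by omega)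
    · intro i hi j hj hv
      have := hg7 (i+1) (by omega) (j+1) (by omega) hv
      omega
    · have := hg6 1 (by omega) (by omega)
      simpa using this
    · intro i hi1 hi2 hv
      have := hg7 (i+1) (by omega) 0 (by omega) hv
      omega
    · exact ht2
    · intro j hj; exact ht3 (j+1) (by omega)
    · exact ht3 0 (by omega)

end NomixMain
section Grow
variable {V : Type*} [DecidableEq V]

lemma fin_cast_val {l : ℕ} (k : ℕ) (hk : k < l+3) : (((k:ℕ) : Fin (l+3))).val = k := by
  simp [Fin.val_natCast, Nat.mod_eq_of_lt hk]

lemma slot_ne {E'' : Finset (Finset V)} {l : ℕ} {v : Fin (l+3) → V} {e : Fin (l+3) → Finset V}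
    (hc : IsBetaCycle E'' l v e) {T : Finset V} (hT : T ⊆ e 0) :
    ∀ j : Fin (l+3), j ≠ 0 → e j ≠ T := by
  intro j hj hET
  obtain ⟨hv, he, hm, hiff⟩ := hc
  have h1 : v (j+1) ∈ e j := (hiff (j+1) j).mpr (Or.inr rfl)
  have h2 : v (j+1) ∈ e 0 := hT (hET ▸ h1)
  rcases (hiff (j+1) 0).mp h2 with hc0 | hc0
  · have h3 : v j ∈ e j := (hiff j j).mpr (Or.inl rfl)
    have h4 : v j ∈ e 0 := hT (hET ▸ h3)
    rcases (hiff j 0).mp h4 with hc1 | hc1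
    · exact hj hc1.symm
    · -- hc1 : 0 + 1 = j, hc0 : 0 = j + 1
      rw [← hc1] at hc0
      rw [show ((0:Fin (l+3))+1+1) = 2 by ring] at hc0
      exact fin2 hc0.symm
  · exact hj (add_right_cancel hc0.symm)

lemma cyc_nat_iff {E'' : Finset (Finset V)} {l : ℕ} {v : Fin (l+3) → V} {e : Fin (l+3) → Finset V}
    (hc : IsBetaCycle E'' l v e) :
    ∀ i j : ℕ, i < l+3 → j < l+3 →
      (v ((i:ℕ) : Fin (l+3)) ∈ e ((j:ℕ) : Fin (l+3)) ↔ (j = i ∨ (j+1) % (l+3) = i)) := by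
  intro i j hi hj
  rw [hc.2.2.2]
  have h1v : (1 : Fin (l+3)).val = 1 := by
    rw [Fin.val_one']
    exact Nat.mod_eq_of_lt (by omega)
  constructor
  · rintro (h | h)
    · left
      have := congrArg Fin.val h
      rwa [fin_cast_val j hj, fin_cast_val i hi] at this
    · right
      have := congrArg Fin.val h
      rw [Fin.add_def, fin_cast_val j hj, fin_cast_val i hi, h1v] at this
      exact this
  · rintro (h | h)
    · left
      exact Fin.ext (by rw [fin_cast_val j hj, fin_cast_val i hi]; exact h)
    · right
      refine Fin.ext ?_
      rw [Fin.add_def, fin_cast_val j hj, fin_cast_val i hi, h1v]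
      exact h

lemma ext_mixed (S f : Finset V) (E : Finset (Finset V))
    (hA : BetaAcyclic (insert S E)) (hf : f ∈ E) (hfS : (f ∩ S).Nonempty)
    (hmax : ∀ g' ∈ E, (g' ∩ S).Nonempty → (g' \ S).Nonempty → ¬ (f ∩ S ⊂ g' ∩ S))
    {l : ℕ} {v : Fin (l+3) → V} {e : Fin (l+3) → Finset V}
    (hc : IsBetaCycle (insert (S ∪ f) E) l v e) (he0 : e 0 = S ∪ f)
    (hu : v 1 ∈ f \ S) (ht : v 0 ∈ S \ f) : False := by
  obtain ⟨hvinj, heinj, hemem, hiff⟩ := hc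
  have hiffN := cyc_nat_iff ⟨hvinj, heinj, hemem, hiff⟩
  have hone : ((0+1:ℕ) : Fin (l+3)) = (1 : Fin (l+3)) := by norm_num
  have hzero : ((0:ℕ) : Fin (l+3)) = (0 : Fin (l+3)) := by norm_num
  have hnot0 : ∀ i : ℕ, 2 ≤ i → i < l+3 → v ((i:ℕ) : Fin (l+3)) ∉ e 0 := by
    intro i h2 hi hv
    have hh := (hiffN i 0 hi (by omega)).mp (by rw [hzero]; exact hv)
    rw [Nat.mod_eq_of_lt (show 0+1 < l+3 by omega)] at hh
    omega
  have heE : ∀ j : ℕ, 1 ≤ j → j < l+3 → e ((j:ℕ) : Fin (l+3)) ∈ E := by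
    intro j h1 hj
    have hne : ((j:ℕ) : Fin (l+3)) ≠ 0 := by
      intro hcon
      have := congrArg Fin.val hcon
      rw [fin_cast_val j hj] at this
      simp at this
      omega
    rcases Finset.mem_insert.mp (hemem _) with h | h
    · exfalso
      have : e ((j:ℕ) : Fin (l+3)) = e 0 := by rw [h, he0]
      exact hne (heinj this)
    · exact h
  have hnef : ∀ j : ℕ, 1 ≤ j → j < l+3 → e ((j:ℕ) : Fin (l+3)) ≠ f := by
    intro j h1 hj
    have hne : ((j:ℕ) : Fin (l+3)) ≠ 0 := by
      intro hcon
      have := congrArg Fin.val hcon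
      rw [fin_cast_val j hj] at this
      simp at this
      omega
    exact slot_ne ⟨hvinj, heinj, hemem, hiff⟩ (he0 ▸ Finset.subset_union_right) _ hne
  refine nomix S f E hA hfS hmax (l+1) f
    (fun k => e (((k+1:ℕ)) : Fin (l+3)))
    (fun k => v (((k+1:ℕ)) : Fin (l+3))) (v 0)
    hf (Finset.inter_subset_left) ?_ ?_ ?_ ?_ ?_ ?_ ?_ ?_ ?_ ?_ ?_ ?_ ?_ ?_
  · intro i hi
    exact heE (i+1) (by omega) (by omega)
  · intro i hi j hj hne heq
    have h2 := heinj heq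
    have h3 := congrArg Fin.val h2
    rw [fin_cast_val (i+1) (by omega), fin_cast_val (j+1) (by omega)] at h3
    omega
  · intro i hi
    exact hnef (i+1) (by omega) (by omega)
  · intro i hi hvS
    by_cases hi0 : i = 0
    · subst hi0
      rw [hone] at hvS
      exact (Finset.mem_sdiff.mp hu).2 hvS
    · refine hnot0 (i+1) (by omega) (by omega) ?_
      rw [he0]
      exact Finset.mem_union_left f hvS
  · intro i hi
    exact (hiffN (i+1) (i+1) (by omega) (by omega)).mpr (Or.inl rfl)
  · intro i h1 hi
    refine (hiffN (i+1) ((i-1)+1) (by omega) (by omega)).mpr (Or.inr ?_)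
    rw [Nat.mod_eq_of_lt (by omega)]
    omega
  · intro i hi j hj hv
    have hh := (hiffN (i+1) (j+1) (by omega) (by omega)).mp hv
    rcases hh with h | h
    · omega
    · by_cases hj2 : j + 2 < l + 3
      · rw [Nat.mod_eq_of_lt (show j+1+1 < l+3 by omega)] at h
        omega
      · have hje : j + 1 + 1 = l + 3 := by omega
        rw [hje, Nat.mod_self] at h
        omega
  · rw [hone]
    exact (Finset.mem_sdiff.mp hu).1
  · intro i h1 hi hv
    refine hnot0 (i+1) (by omega) (by omega) ?_
    rw [he0]
    exact Finset.mem_union_right S hv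
  · exact (Finset.mem_sdiff.mp ht).1
  · have hh := (hiffN 0 (l+2) (by omega) (by omega)).mpr
      (Or.inr (by rw [show l+2+1 = l+3 by omega, Nat.mod_self]))
    rw [hzero] at hh
    exact hh
  · intro j hj hv
    have hh := (hiffN 0 (j+1) (by omega) (by omega)).mp (by rw [hzero]; exact hv)
    rcases hh with h | h
    · omega
    · rw [Nat.mod_eq_of_lt (show j+1+1 < l+3 by omega)] at h
      omega
  · exact (Finset.mem_sdiff.mp ht).2
  · exact (Finset.mem_sdiff.mp ht).2

end Grow
section Grow2
variable {V : Type*} [DecidableEq V]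

lemma slot_swap {E'' F : Finset (Finset V)} {l : ℕ} {v : Fin (l+3) → V} {e : Fin (l+3) → Finset V}
    (hc : IsBetaCycle E'' l v e) (T : Finset V) (hT : T ⊆ e 0)
    (h0 : v 0 ∈ T) (h1 : v 1 ∈ T)
    (hTF : T ∈ F) (hEF : ∀ j : Fin (l+3), j ≠ 0 → e j ∈ F) :
    ¬ BetaAcyclic F := by
  intro hA
  obtain ⟨hv, he, hm, hiff⟩ := hc
  apply hA
  refine ⟨l, v, Function.update e 0 T, hv, ?_, ?_, ?_⟩
  · intro i j hij
    by_cases hi : i = 0 <;> by_cases hj : j = 0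
    · rw [hi, hj]
    · exfalso
      rw [hi, Function.update_self, Function.update_of_ne hj] at hij
      exact slot_ne ⟨hv, he, hm, hiff⟩ hT j hj hij.symm
    · exfalso
      rw [hj, Function.update_self, Function.update_of_ne hi] at hij
      exact slot_ne ⟨hv, he, hm, hiff⟩ hT i hi hij
    · rw [Function.update_of_ne hi, Function.update_of_ne hj] at hij
      exact he hij
  · intro i
    by_cases hi : i = 0
    · rw [hi, Function.update_self]; exact hTF
    · rw [Function.update_of_ne hi]; exact hEF i hi
  · intro i j
    by_cases hj : j = 0
    · subst hj
      rw [Function.update_self]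
      constructor
      · intro hvT
        exact (hiff i 0).mp (hT hvT)
      · rintro (h | h)
        · rw [← h]; exact h0
        · rw [← h, zero_add]; exact h1
    · rw [Function.update_of_ne hj]
      exact hiff i j

lemma ftwo1 {l : ℕ} : (1 : Fin (l+3)) ≠ 2 := by
  intro h
  have h2 : (1 : Fin (l+3)) - 1 = 2 - 1 := by rw [h]
  rw [sub_self] at h2
  rw [show (2 : Fin (l+3)) - 1 = 1 by ring] at h2
  exact fin1 h2.symm

lemma fneg1 {l : ℕ} : (-1 : Fin (l+3)) ≠ 0 := by
  intro h
  exact fin1 (neg_eq_zero.mp h)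

lemma f1neg1 {l : ℕ} : (1 : Fin (l+3)) ≠ -1 := by
  intro h
  have := congrArg (· + 1) h
  simp only [neg_add_cancel] at this
  rw [one_add_one_eq_two] at this
  exact fin2 this

lemma grow (S f : Finset V) (E : Finset (Finset V))
    (hA : BetaAcyclic (insert S E)) (hf : f ∈ E) (hfS : (f ∩ S).Nonempty)
    (hmax : ∀ g' ∈ E, (g' ∩ S).Nonempty → (g' \ S).Nonempty → ¬ (f ∩ S ⊂ g' ∩ S)) :
    BetaAcyclic (insert (S ∪ f) E) := by
  by_cases hAE : S ∪ f ∈ E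
  · rw [Finset.insert_eq_self.mpr hAE]
    exact beta_mono (Finset.subset_insert _ _) hA
  intro hcyc
  obtain ⟨l, v0, e0, hc0⟩ := hcyc
  by_cases hslot : ∃ i₀, e0 i₀ = S ∪ f
  swap
  · push_neg at hslot
    refine hA ⟨l, v0, e0, hc0.1, hc0.2.1, fun i => ?_, hc0.2.2.2⟩
    rcases Finset.mem_insert.mp (hc0.2.2.1 i) with h | h
    · exact absurd h (hslot i)
    · exact Finset.mem_insert_of_mem h
  obtain ⟨i₀, hi₀⟩ := hslot
  have hc : IsBetaCycle (insert (S ∪ f) E) l (fun i => v0 (i + i₀)) (fun i => e0 (i + i₀)) :=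
    rot hc0 i₀
  set v : Fin (l+3) → V := fun i => v0 (i + i₀) with hvdef
  set e : Fin (l+3) → Finset V := fun i => e0 (i + i₀) with hedef
  have he0 : e 0 = S ∪ f := by
    show e0 (0 + i₀) = S ∪ f
    rw [zero_add]
    exact hi₀
  have hu : v 1 ∈ e 0 := (hc.2.2.2 1 0).mpr (Or.inr (zero_add 1))
  have ht : v 0 ∈ e 0 := (hc.2.2.2 0 0).mpr (Or.inl rfl)
  rw [he0] at hu ht
  have hEmem : ∀ j : Fin (l+3), j ≠ 0 → e j ∈ E := by
    intro j hj
    rcases Finset.mem_insert.mp (hc.2.2.1 j) with h | h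
    · exact absurd (hc.2.1 (h.trans he0.symm)) hj
    · exact h
  by_cases hu1 : v 1 ∈ S <;> by_cases ht1 : v 0 ∈ S
  · -- both in S : replace slot by S
    exact slot_swap hc S (he0 ▸ Finset.subset_union_left) ht1 hu1
      (Finset.mem_insert_self S E) (fun j hj => Finset.mem_insert_of_mem (hEmem j hj)) hA
  · -- u ∈ S, t ∈ f
    have htf : v 0 ∈ f := by
      rcases Finset.mem_union.mp ht with h | h
      · exact absurd h ht1
      · exact h
    by_cases hu2 : v 1 ∈ f
    · exact slot_swap hc f (he0 ▸ Finset.subset_union_right) htf hu2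
        (Finset.mem_insert_of_mem hf) (fun j hj => Finset.mem_insert_of_mem (hEmem j hj)) hA
    · -- u ∈ S \ f, t ∈ f \ S : reverse the cycle
      have hc2 := rot (rev hc) (-1)
      refine ext_mixed S f E hA hf hfS hmax hc2 ?_ ?_ ?_
      · show e (-(0 + -1 + 1)) = S ∪ f
        rw [show (-(0 + -1 + 1) : Fin (l+3)) = 0 by ring]
        exact he0
      · show v (-(1 + -1)) ∈ f \ S
        rw [show (-(1 + -1) : Fin (l+3)) = 0 by ring]
        exact Finset.mem_sdiff.mpr ⟨htf, ht1⟩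
      · show v (-(0 + -1)) ∈ S \ f
        rw [show (-(0 + -1) : Fin (l+3)) = 1 by ring]
        exact Finset.mem_sdiff.mpr ⟨hu1, hu2⟩
  · -- u ∈ f \ S, t ∈ S
    have huf : v 1 ∈ f := by
      rcases Finset.mem_union.mp hu with h | h
      · exact absurd h hu1
      · exact h
    by_cases ht2 : v 0 ∈ f
    · exact slot_swap hc f (he0 ▸ Finset.subset_union_right) ht2 huf
        (Finset.mem_insert_of_mem hf) (fun j hj => Finset.mem_insert_of_mem (hEmem j hj)) hA
    · exact ext_mixed S f E hA hf hfS hmax hc he0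
        (Finset.mem_sdiff.mpr ⟨huf, hu1⟩) (Finset.mem_sdiff.mpr ⟨ht1, ht2⟩)
  · -- u ∈ f, t ∈ f (neither in S)
    have huf : v 1 ∈ f := by
      rcases Finset.mem_union.mp hu with h | h
      · exact absurd h hu1
      · exact h
    have htf : v 0 ∈ f := by
      rcases Finset.mem_union.mp ht with h | h
      · exact absurd h ht1
      · exact h
    exact slot_swap hc f (he0 ▸ Finset.subset_union_right) htf huf
      (Finset.mem_insert_of_mem hf) (fun j hj => Finset.mem_insert_of_mem (hEmem j hj)) hA

lemma grow_disjoint (S e₀ : Finset V) (E : Finset (Finset V))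
    (hA : BetaAcyclic (insert S E)) (he₀ : e₀ ∈ E)
    (hnc : ∀ g' ∈ E, (g' ∩ S).Nonempty → (g' \ S).Nonempty → False) :
    BetaAcyclic (insert (S ∪ e₀) E) := by
  by_cases hAE : S ∪ e₀ ∈ E
  · rw [Finset.insert_eq_self.mpr hAE]
    exact beta_mono (Finset.subset_insert _ _) hA
  intro hcyc
  obtain ⟨l, v0, e0f, hc0⟩ := hcyc
  by_cases hslot : ∃ i₀, e0f i₀ = S ∪ e₀
  swap
  · push_neg at hslot
    refine hA ⟨l, v0, e0f, hc0.1, hc0.2.1, fun i => ?_, hc0.2.2.2⟩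
    rcases Finset.mem_insert.mp (hc0.2.2.1 i) with h | h
    · exact absurd h (hslot i)
    · exact Finset.mem_insert_of_mem h
  obtain ⟨i₀, hi₀⟩ := hslot
  have hc : IsBetaCycle (insert (S ∪ e₀) E) l (fun i => v0 (i + i₀)) (fun i => e0f (i + i₀)) :=
    rot hc0 i₀
  set v : Fin (l+3) → V := fun i => v0 (i + i₀) with hvdef
  set e : Fin (l+3) → Finset V := fun i => e0f (i + i₀) with hedef
  have he0 : e 0 = S ∪ e₀ := by
    show e0f (0 + i₀) = S ∪ e₀
    rw [zero_add]
    exact hi₀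
  have hu : v 1 ∈ e 0 := (hc.2.2.2 1 0).mpr (Or.inr (zero_add 1))
  have ht : v 0 ∈ e 0 := (hc.2.2.2 0 0).mpr (Or.inl rfl)
  rw [he0] at hu ht
  have hEmem : ∀ j : Fin (l+3), j ≠ 0 → e j ∈ E := by
    intro j hj
    rcases Finset.mem_insert.mp (hc.2.2.1 j) with h | h
    · exact absurd (hc.2.1 (h.trans he0.symm)) hj
    · exact h
  by_cases hu1 : v 1 ∈ S <;> by_cases ht1 : v 0 ∈ S
  · exact slot_swap hc S (he0 ▸ Finset.subset_union_left) ht1 hu1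
      (Finset.mem_insert_self S E) (fun j hj => Finset.mem_insert_of_mem (hEmem j hj)) hA
  · -- u ∈ S \ e₀-side : e 1 is a crossing edge
    have hv2 : v 2 ∈ e 1 := (hc.2.2.2 2 1).mpr (Or.inr one_add_one_eq_two)
    have hv2n : v 2 ∉ e 0 := by
      intro hmem
      rcases (hc.2.2.2 2 0).mp hmem with h | h
      · exact fin2 h.symm
      · rw [zero_add] at h
        exact ftwo1 h
    have hu11 : v 1 ∈ e 1 := (hc.2.2.2 1 1).mpr (Or.inl rfl)
    refine hnc (e 1) (hEmem 1 fin1) ⟨v 1, Finset.mem_inter.mpr ⟨hu11, hu1⟩⟩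
      ⟨v 2, Finset.mem_sdiff.mpr ⟨hv2, fun hS => hv2n (he0 ▸ Finset.mem_union_left e₀ hS)⟩⟩
  · -- t ∈ S \ ..., u ∉ S : e (-1) is a crossing edge
    have hvm : v (-1) ∈ e (-1) := (hc.2.2.2 (-1) (-1)).mpr (Or.inl rfl)
    have ht0 : v 0 ∈ e (-1) := (hc.2.2.2 0 (-1)).mpr (Or.inr (neg_add_cancel 1))
    have hvmn : v (-1) ∉ e 0 := by
      intro hmem
      rcases (hc.2.2.2 (-1) 0).mp hmem with h | h
      · -- 0 = -1
        exact fneg1 h.symm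
      · rw [zero_add] at h
        exact f1neg1 h
    refine hnc (e (-1)) (hEmem (-1) fneg1) ⟨v 0, Finset.mem_inter.mpr ⟨ht0, ht1⟩⟩
      ⟨v (-1), Finset.mem_sdiff.mpr ⟨hvm, fun hS => hvmn (he0 ▸ Finset.mem_union_left e₀ hS)⟩⟩
  · -- neither endpoint in S : both in e₀, swap slot with e₀
    have huf : v 1 ∈ e₀ := by
      rcases Finset.mem_union.mp hu with h | h
      · exact absurd h hu1
      · exact h
    have htf : v 0 ∈ e₀ := by
      rcases Finset.mem_union.mp ht with h | h
      · exact absurd h ht1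
      · exact h
    exact slot_swap hc e₀ (he0 ▸ Finset.subset_union_right) htf huf
      (Finset.mem_insert_of_mem he₀) (fun j hj => Finset.mem_insert_of_mem (hEmem j hj)) hA

end Grow2
section Core
variable {V : Type*} [DecidableEq V]

lemma core : ∀ (n m : ℕ) (Vs S : Finset V) (E : Finset (Finset V)),
    (Vs \ S).card ≤ n → E.card ≤ m →
    S ⊆ Vs → (∀ e ∈ E, e ⊆ Vs) →
    BetaAcyclic (insert S E) → (Vs \ S).Nonempty →
    ∃ z ∈ Vs \ S, IsNestSet E {z} := by
  intro n
  induction n with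
  | zero =>
    intro m Vs S E hn _ _ _ _ hne
    exact absurd (Finset.card_pos.mpr hne) (by omega)
  | succ n ihn =>
    intro m
    induction m with
    | zero =>
      intro Vs S E hn hm hSV hEV hA hne
      have hE : E = ∅ := Finset.card_eq_zero.mp (by omega)
      obtain ⟨z, hz⟩ := hne
      refine ⟨z, hz, ?_⟩
      intro e₁ he₁
      rw [hE] at he₁
      simp at he₁
    | succ m ihm =>
      intro Vs S E hn hm hSV hEV hA hne
      by_cases hcr : ∃ f ∈ E, (f ∩ S).Nonempty ∧ (f \ S).Nonempty
      · -- crossing edges exist : choose one with S-part of maximal cardinality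
        set Cr := E.filter (fun g => (g ∩ S).Nonempty ∧ (g \ S).Nonempty) with hCr
        have hCrne : Cr.Nonempty := by
          obtain ⟨f, hf, h1, h2⟩ := hcr
          exact ⟨f, Finset.mem_filter.mpr ⟨hf, h1, h2⟩⟩
        obtain ⟨f, hfCr, hfmax⟩ := Finset.exists_max_image Cr (fun g => (g ∩ S).card) hCrne
        obtain ⟨hfE, hfS, hfO⟩ : f ∈ E ∧ (f ∩ S).Nonempty ∧ (f \ S).Nonempty := by
          have := Finset.mem_filter.mp hfCr
          exact ⟨this.1, this.2.1, this.2.2⟩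
        have hmax : ∀ g' ∈ E, (g' ∩ S).Nonempty → (g' \ S).Nonempty → ¬ (f ∩ S ⊂ g' ∩ S) := by
          intro g' hg' h1 h2 hss
          have hlt := Finset.card_lt_card hss
          have := hfmax g' (Finset.mem_filter.mpr ⟨hg', h1, h2⟩)
          omega
        have hfV : f ⊆ Vs := hEV f hfE
        by_cases hout : (Vs \ (S ∪ f)).Nonempty
        · -- grow
          have hA' := grow S f E hA hfE hfS hmax
          have hsub : Vs \ (S ∪ f) ⊆ Vs \ S :=
            Finset.sdiff_subset_sdiff (le_refl Vs) Finset.subset_union_left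
          have hlt : (Vs \ (S ∪ f)).card ≤ n := by
            obtain ⟨x, hx⟩ := hfO
            obtain ⟨hxf, hxS⟩ := Finset.mem_sdiff.mp hx
            have hxout : x ∈ Vs \ S := Finset.mem_sdiff.mpr ⟨hfV hxf, hxS⟩
            have hxnot : x ∉ Vs \ (S ∪ f) := by
              intro hcon
              exact (Finset.mem_sdiff.mp hcon).2 (Finset.mem_union_right S hxf)
            have : (Vs \ (S ∪ f)).card < (Vs \ S).card := by
              refine Finset.card_lt_card ?_
              rw [Finset.ssubset_iff_subset_ne]
              exact ⟨hsub, fun hcon => hxnot (hcon ▸ hxout)⟩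
            omega
          obtain ⟨z, hz, hnest⟩ := ihn E.card Vs (S ∪ f) E hlt le_rfl
            (Finset.union_subset hSV hfV) hEV hA' hout
          exact ⟨z, hsub hz, hnest⟩
        · -- Vs \ S ⊆ f : remove f and use maximality for the transfer
          have hOf : ∀ x ∈ Vs \ S, x ∈ f := by
            intro x hx
            by_contra hxf
            exact hout ⟨x, Finset.mem_sdiff.mpr
              ⟨(Finset.mem_sdiff.mp hx).1,
               fun hc => (by
                 rcases Finset.mem_union.mp hc with h | h
                 · exact (Finset.mem_sdiff.mp hx).2 h
                 · exact hxf h)⟩⟩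
          have hcard : (E.erase f).card ≤ m := by
            rw [Finset.card_erase_of_mem hfE]
            omega
          obtain ⟨z, hzOut, hnest⟩ := ihm Vs S (E.erase f) hn hcard hSV
            (fun e he => hEV e (Finset.erase_subset f E he))
            (beta_mono (Finset.insert_subset_insert S (Finset.erase_subset f E)) hA) hne
          have hzS : z ∉ S := (Finset.mem_sdiff.mp hzOut).2
          have hzf : z ∈ f := hOf z hzOut
          refine ⟨z, hzOut, ?_⟩
          -- comparability of any edge at z with f
          have hcomp : ∀ c ∈ E, z ∈ c → c ≠ f → (c \ {z} ⊆ f \ {z} ∨ f \ {z} ⊆ c \ {z}) := by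
            intro c hc hzc hcf
            by_cases hsubc : c \ {z} ⊆ f \ {z}
            · exact Or.inl hsubc
            · exfalso
              obtain ⟨p', hp'c, hp'nf⟩ := Finset.not_subset.mp hsubc
              obtain ⟨hp'cc, hp'z⟩ := Finset.mem_sdiff.mp hp'c
              have hp'zz : p' ≠ z := by simpa using hp'z
              have hp'f : p' ∉ f := fun h => hp'nf (Finset.mem_sdiff.mpr ⟨h, by simpa using hp'zz⟩)
              have hp'S : p' ∈ S := by
                by_contra hp'S
                exact hp'f (hOf p' (Finset.mem_sdiff.mpr ⟨hEV c hc hp'cc, hp'S⟩))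
              by_cases hr : ∃ r ∈ f, r ∈ S ∧ r ∉ c
              · obtain ⟨r, hrf, hrS, hrc⟩ := hr
                exact triangle (insert S E) c f S z r p'
                  (Finset.mem_insert_of_mem hc) (Finset.mem_insert_of_mem hfE)
                  (Finset.mem_insert_self S E)
                  hzc hzf hzS hrf hrS hrc hp'S hp'cc hp'f hA
              · push_neg at hr
                refine hmax c hc ⟨p', Finset.mem_inter.mpr ⟨hp'cc, hp'S⟩⟩
                  ⟨z, Finset.mem_sdiff.mpr ⟨hzc, hzS⟩⟩ ?_
                constructor
                · intro x hx
                  obtain ⟨hxf, hxS⟩ := Finset.mem_inter.mp hx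
                  exact Finset.mem_inter.mpr ⟨hr x hxf hxS, hxS⟩
                · intro hcon
                  have := hcon (Finset.mem_inter.mpr ⟨hp'cc, hp'S⟩)
                  exact hp'f (Finset.mem_inter.mp this).1
          intro e₁ he₁ e₂ he₂ hne₁ hne₂
          have hz1 : z ∈ e₁ := by
            obtain ⟨x, hx⟩ := hne₁
            obtain ⟨hx1, hx2⟩ := Finset.mem_inter.mp hx
            rwa [Finset.mem_singleton.mp hx2] at hx1
          have hz2 : z ∈ e₂ := by
            obtain ⟨x, hx⟩ := hne₂
            obtain ⟨hx1, hx2⟩ := Finset.mem_inter.mp hx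
            rwa [Finset.mem_singleton.mp hx2] at hx1
          by_cases h1f : e₁ = f <;> by_cases h2f : e₂ = f
          · rw [h1f, h2f]
            exact Or.inl subset_rfl
          · rw [h1f]
            rcases hcomp e₂ he₂ hz2 h2f with h | h
            · exact Or.inr h
            · exact Or.inl h
          · rw [h2f]
            exact hcomp e₁ he₁ hz1 h1f
          · exact hnest e₁ (Finset.mem_erase.mpr ⟨h1f, he₁⟩) e₂ (Finset.mem_erase.mpr ⟨h2f, he₂⟩)
              hne₁ hne₂
      · -- no crossing edges
        by_cases hef : ∃ e₀ ∈ E, (e₀ \ S).Nonempty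
        · obtain ⟨e₀, he₀E, he₀O⟩ := hef
          have hnc : ∀ g' ∈ E, (g' ∩ S).Nonempty → (g' \ S).Nonempty → False := by
            intro g' h1 h2 h3
            exact hcr ⟨g', h1, h2, h3⟩
          have he₀V : e₀ ⊆ Vs := hEV e₀ he₀E
          have he₀dis : ∀ x ∈ e₀, x ∉ S := by
            intro x hx hxS
            exact hnc e₀ he₀E ⟨x, Finset.mem_inter.mpr ⟨hx, hxS⟩⟩ he₀O
          by_cases hout : (Vs \ (S ∪ e₀)).Nonempty
          · have hA' := grow_disjoint S e₀ E hA he₀E hnc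
            have hsub : Vs \ (S ∪ e₀) ⊆ Vs \ S :=
              Finset.sdiff_subset_sdiff (le_refl Vs) Finset.subset_union_left
            have hlt : (Vs \ (S ∪ e₀)).card ≤ n := by
              obtain ⟨x, hx⟩ := he₀O
              obtain ⟨hxf, hxS⟩ := Finset.mem_sdiff.mp hx
              have hxout : x ∈ Vs \ S := Finset.mem_sdiff.mpr ⟨he₀V hxf, hxS⟩
              have hxnot : x ∉ Vs \ (S ∪ e₀) := by
                intro hcon
                exact (Finset.mem_sdiff.mp hcon).2 (Finset.mem_union_right S hxf)
              have : (Vs \ (S ∪ e₀)).card < (Vs \ S).card := by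
                refine Finset.card_lt_card ?_
                rw [Finset.ssubset_iff_subset_ne]
                exact ⟨hsub, fun hcon => hxnot (hcon ▸ hxout)⟩
              omega
            obtain ⟨z, hz, hnest⟩ := ihn E.card Vs (S ∪ e₀) E hlt le_rfl
              (Finset.union_subset hSV he₀V) hEV hA' hout
            exact ⟨z, hsub hz, hnest⟩
          · have hOf : ∀ x ∈ Vs \ S, x ∈ e₀ := by
              intro x hx
              by_contra hxf
              exact hout ⟨x, Finset.mem_sdiff.mpr
                ⟨(Finset.mem_sdiff.mp hx).1,
                 fun hc => (by
                   rcases Finset.mem_union.mp hc with h | h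
                   · exact (Finset.mem_sdiff.mp hx).2 h
                   · exact hxf h)⟩⟩
            have hcard : (E.erase e₀).card ≤ m := by
              rw [Finset.card_erase_of_mem he₀E]
              omega
            obtain ⟨z, hzOut, hnest⟩ := ihm Vs S (E.erase e₀) hn hcard hSV
              (fun e he => hEV e (Finset.erase_subset e₀ E he))
              (beta_mono (Finset.insert_subset_insert S (Finset.erase_subset e₀ E)) hA) hne
            have hzS : z ∉ S := (Finset.mem_sdiff.mp hzOut).2
            refine ⟨z, hzOut, ?_⟩
            have hcomp : ∀ c ∈ E, z ∈ c → c \ {z} ⊆ e₀ \ {z} := by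
              intro c hc hzc
              have hcS : ∀ x ∈ c, x ∉ S := by
                intro x hx hxS
                exact hnc c hc ⟨x, Finset.mem_inter.mpr ⟨hx, hxS⟩⟩ ⟨z, Finset.mem_sdiff.mpr ⟨hzc, hzS⟩⟩
              intro x hx
              obtain ⟨hxc, hxz⟩ := Finset.mem_sdiff.mp hx
              refine Finset.mem_sdiff.mpr ⟨?_, hxz⟩
              exact hOf x (Finset.mem_sdiff.mpr ⟨hEV c hc hxc, hcS x hxc⟩)
            intro e₁ he₁ e₂ he₂ hne₁ hne₂
            have hz1 : z ∈ e₁ := by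
              obtain ⟨x, hx⟩ := hne₁
              obtain ⟨hx1, hx2⟩ := Finset.mem_inter.mp hx
              rwa [Finset.mem_singleton.mp hx2] at hx1
            have hz2 : z ∈ e₂ := by
              obtain ⟨x, hx⟩ := hne₂
              obtain ⟨hx1, hx2⟩ := Finset.mem_inter.mp hx
              rwa [Finset.mem_singleton.mp hx2] at hx1
            by_cases h1f : e₁ = e₀ <;> by_cases h2f : e₂ = e₀
            · rw [h1f, h2f]
              exact Or.inl subset_rfl
            · rw [h1f]
              exact Or.inr (hcomp e₂ he₂ hz2)
            · rw [h2f]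
              exact Or.inl (hcomp e₁ he₁ hz1)
            · exact hnest e₁ (Finset.mem_erase.mpr ⟨h1f, he₁⟩) e₂ (Finset.mem_erase.mpr ⟨h2f, he₂⟩)
                hne₁ hne₂
        · -- every edge lies inside S : outside vertices are isolated
          obtain ⟨z, hz⟩ := hne
          refine ⟨z, hz, ?_⟩
          intro e₁ he₁ e₂ he₂ hne₁ hne₂
          exfalso
          have hz1 : z ∈ e₁ := by
            obtain ⟨x, hx⟩ := hne₁
            obtain ⟨hx1, hx2⟩ := Finset.mem_inter.mp hx
            rwa [Finset.mem_singleton.mp hx2] at hx1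
          exact hef ⟨e₁, he₁, ⟨z, Finset.mem_sdiff.mpr ⟨hz1, (Finset.mem_sdiff.mp hz).2⟩⟩⟩

/-- The hard existence lemma: a β-acyclic hypergraph has a nest point. -/
lemma exists_nest_vertex (Vs : Finset V) (E : Finset (Finset V))
    (hE : ∀ e ∈ E, e ⊆ Vs ∧ 2 ≤ e.card) (hA : BetaAcyclic E) (hVs : Vs.Nonempty) :
    ∃ z ∈ Vs, IsNestSet E {z} := by
  have hA' : BetaAcyclic (insert ∅ E) := by
    intro hcyc
    obtain ⟨l, v, e, h1, h2, h3, h4⟩ := hcyc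
    apply hA
    refine ⟨l, v, e, h1, h2, fun i => ?_, h4⟩
    rcases Finset.mem_insert.mp (h3 i) with h | h
    · exfalso
      have := (h4 i i).mpr (Or.inl rfl)
      rw [h] at this
      simp at this
    · exact h
  obtain ⟨z, hz, hnest⟩ := core (Vs \ ∅).card E.card Vs ∅ E le_rfl le_rfl
    (Finset.empty_subset _) (fun e he => (hE e he).1) hA' (by simpa using hVs)
  exact ⟨z, by simpa using hz, hnest⟩

end Core
section Forward
variable {V : Type*} [DecidableEq V]

lemma mem_foldr_union {L : List (Finset V)} {N : Finset V} (h : N ∈ L) :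
    N ⊆ L.foldr (· ∪ ·) ∅ := by
  induction L with
  | nil => simp at h
  | cons M L ih =>
    simp only [List.foldr_cons]
    rcases List.mem_cons.mp h with rfl | h
    · exact Finset.subset_union_left
    · exact (ih h).trans Finset.subset_union_right

lemma forward_rec : ∀ (n : ℕ) (Vs : Finset V) (E : Finset (Finset V)),
    Vs.card = n → (∀ e ∈ E, e ⊆ Vs ∧ 2 ≤ e.card) → BetaAcyclic E →
    ∃ L, IsElimOrder Vs E L ∧ ∀ N ∈ L, N.card = 1 := by
  intro n
  induction n with
  | zero =>
    intro Vs E hcard hE hA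
    have : Vs = ∅ := Finset.card_eq_zero.mp hcard
    subst this
    refine ⟨[], ⟨?_, ?_, ?_, ?_⟩, ?_⟩
    · exact List.Pairwise.nil
    · simp
    · simp
    · intro i; exact absurd i.2 (by simp)
    · simp
  | succ n ih =>
    intro Vs E hcard hE hA
    have hVs : Vs.Nonempty := by
      rw [← Finset.card_pos, hcard]; omega
    obtain ⟨z, hzVs, hz⟩ := exists_nest_vertex Vs E hE hA hVs
    have hE' : ∀ e' ∈ hreduce E {z}, e' ⊆ Vs.erase z ∧ 2 ≤ e'.card := by
      intro e' he'
      obtain ⟨⟨e₀, he₀, rfl⟩, hc⟩ := mem_hreduce.mp he'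
      refine ⟨?_, hc⟩
      rw [Finset.subset_erase]
      exact ⟨(Finset.sdiff_subset).trans (hE e₀ he₀).1, by simp⟩
    obtain ⟨L', hL', h1'⟩ := ih (Vs.erase z) (hreduce E {z})
      (by rw [Finset.card_erase_of_mem hzVs, hcard]; omega) hE' (cycle_lift hA)
    obtain ⟨hd', hn', hu', hnest'⟩ := hL'
    refine ⟨{z} :: L', ⟨?_, ?_, ?_, ?_⟩, ?_⟩
    · refine List.Pairwise.cons ?_ hd'
      intro N hN
      rw [Finset.disjoint_singleton_left]
      intro hzN
      have : z ∈ Vs.erase z := hu' ▸ mem_foldr_union hN hzN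
      simp at this
    · intro N hN
      rcases List.mem_cons.mp hN with rfl | hN
      · exact Finset.singleton_nonempty z
      · exact hn' N hN
    · simp only [List.foldr_cons, hu']
      rw [show ({z} ∪ Vs.erase z : Finset V) = insert z (Vs.erase z) from rfl, Finset.insert_erase hzVs]
    · intro i
      rcases i with ⟨iv, hiv⟩
      cases iv with
      | zero => simpa using hz
      | succ j =>
        have hj : j < L'.length := by simpa using hiv
        have e1 : (({z} :: L').take (j+1)).foldl hreduce E
            = (L'.take j).foldl hreduce (hreduce E {z}) := by
          rw [List.take_succ_cons, List.foldl_cons]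
        have e2 : ({z} :: L').get ⟨j+1, hiv⟩ = L'.get ⟨j, hj⟩ := rfl
        rw [show ((⟨j+1, hiv⟩ : Fin (({z} :: L').length)) : ℕ) = j + 1 from rfl]
        rw [e1, e2]
        exact hnest' ⟨j, hj⟩
    · intro N hN
      rcases List.mem_cons.mp hN with rfl | hN
      · simp
      · exact h1' N hN

end Forward

/-- A hypergraph `G` is β-acyclic if and only if `nsw(G) = 1`, i.e. iff it admits a
nest-set elimination order all of whose elements are singletons. -/
theorem stmt_8 {V : Type*} [Fintype V] [DecidableEq V] (E : Finset (Finset V))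
    (hE : ∀ e ∈ E, 2 ≤ e.card) :
    BetaAcyclic E ↔
      ∃ L : List (Finset V), IsElimOrder Finset.univ E L ∧ ∀ N ∈ L, N.card = 1 := by
  constructor
  · intro hA
    exact forward_rec (Finset.univ.card) Finset.univ E rfl
      (fun e he => ⟨Finset.subset_univ e, hE e he⟩) hA
  · rintro ⟨L, hL, h1⟩
    exact backward_dir E L hL h1
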